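/- Let W_s, W_{s+1}, …, W_t be independent random n×n real matrices, each satisfying E[W·Wᵀ] = α₁·I_n + (1−α₁)·A_n and E[W·A_n·Wᵀ] = α₂·I_n + (1−α₂)·A_n, where 0 < α₂ < α₁ < 1. Then for any fixed d×n real matrix G, E‖ G·W_s·W_{s+1}⋯W_t·(I_n − A_n) ‖_F² = (α₁ − α₂)^{t−s+1}·‖ G·(I_n − A_n) ‖_F². In particular, for each such W, E[ W·(I_n − A_n)·Wᵀ ] = (α₁ − α₂)·(I_n − A_n). -/

import Mathlib

open MeasureTheory ProbabilityTheory Matrix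

/-- Measurable-space structure on matrices (entrywise). -/
instance matrixMeasurableSpace {m n α : Type*} [MeasurableSpace α] :
    MeasurableSpace (Matrix m n α) := by unfold Matrix; infer_instance

/-- The `n × n` matrix `A_n = (1/n)·𝟙𝟙ᵀ` with all entries `1/n`. -/
noncomputable def stdA (n : ℕ) : Matrix (Fin n) (Fin n) ℝ := Matrix.of fun _ _ => (1 : ℝ) / n

/-- The squared Frobenius norm `‖M‖_F² = ∑_{a,b} M a b ^ 2`. -/
noncomputable def frobSq {m k : ℕ} (M : Matrix (Fin m) (Fin k) ℝ) : ℝ := ∑ a, ∑ b, M a b ^ 2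

/-- The ordered matrix product `W s ω * W (s+1) ω * ⋯ * W t ω`. -/
noncomputable def matProd {Ω : Type*} {n : ℕ} (W : ℕ → Ω → Matrix (Fin n) (Fin n) ℝ)
    (s t : ℕ) (ω : Ω) : Matrix (Fin n) (Fin n) ℝ :=
  ((List.range (t + 1 - s)).map fun k => W (s + k) ω).prod

section helpers

lemma s5_sum_swap3 {A B C : Type*} [Fintype A] [Fintype B] [Fintype C]
    {M : Type*} [AddCommMonoid M] (f : A → B → C → M) :
    ∑ a, ∑ b, ∑ c, f a b c = ∑ b, ∑ c, ∑ a, f a b c := by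
  rw [Finset.sum_comm]
  exact Finset.sum_congr rfl fun b _ => Finset.sum_comm

lemma s5_sum_swap4 {A B C D : Type*} [Fintype A] [Fintype B] [Fintype C] [Fintype D]
    {M : Type*} [AddCommMonoid M] (f : A → B → C → D → M) :
    ∑ a, ∑ b, ∑ c, ∑ d, f a b c d = ∑ c, ∑ d, ∑ a, ∑ b, f a b c d :=
  calc ∑ a, ∑ b, ∑ c, ∑ d, f a b c d
      = ∑ a, ∑ c, ∑ b, ∑ d, f a b c d :=
        Finset.sum_congr rfl fun a _ => Finset.sum_comm
    _ = ∑ c, ∑ a, ∑ b, ∑ d, f a b c d := Finset.sum_comm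
    _ = ∑ c, ∑ a, ∑ d, ∑ b, f a b c d :=
        Finset.sum_congr rfl fun c _ => Finset.sum_congr rfl fun a _ => Finset.sum_comm
    _ = ∑ c, ∑ d, ∑ a, ∑ b, f a b c d :=
        Finset.sum_congr rfl fun c _ => Finset.sum_comm

lemma s5_measurable_entry {α : Type*} [MeasurableSpace α] {m k : ℕ}
    {f : α → Matrix (Fin m) (Fin k) ℝ} (hf : Measurable f) (i : Fin m) (j : Fin k) :
    Measurable fun a => f a i j :=
  (measurable_pi_apply j).comp ((measurable_pi_apply i).comp hf)

lemma s5_measurable_mul {α : Type*} [MeasurableSpace α] {n : ℕ}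
    {f g : α → Matrix (Fin n) (Fin n) ℝ} (hf : Measurable f) (hg : Measurable g) :
    Measurable fun a => f a * g a := by
  apply measurable_pi_lambda
  intro i
  apply measurable_pi_lambda
  intro j
  have : (fun a => (f a * g a) i j) = fun a => ∑ c, f a i c * g a c j := by
    funext a; rw [Matrix.mul_apply]
  rw [this]
  exact Finset.measurable_sum _ fun c _ =>
    (s5_measurable_entry hf i c).mul (s5_measurable_entry hg c j)

lemma s5_measurable_list_prod {α : Type*} [MeasurableSpace α] {n : ℕ}
    (l : List ℕ) (g : ℕ → α → Matrix (Fin n) (Fin n) ℝ) (hg : ∀ j, Measurable (g j)) :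
    Measurable fun a => (l.map fun j => g j a).prod := by
  induction l with
  | nil => simpa using measurable_const
  | cons j l ih =>
      simp only [List.map_cons, List.prod_cons]
      exact s5_measurable_mul (hg j) ih

lemma s5_matProd_measurable {Ω : Type*} [MeasurableSpace Ω] {n : ℕ}
    (W : ℕ → Ω → Matrix (Fin n) (Fin n) ℝ) (hW : ∀ r, Measurable (W r)) (s u : ℕ) :
    Measurable (matProd W s u) :=
  s5_measurable_list_prod _ (fun j => W (s + j)) (fun j => hW (s + j))

lemma s5_matProd_base {Ω : Type*} {n : ℕ} (W : ℕ → Ω → Matrix (Fin n) (Fin n) ℝ)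
    (s : ℕ) (ω : Ω) : matProd W s s ω = W s ω := by
  unfold matProd
  have : s + 1 - s = 1 := by omega
  rw [this]
  simp [List.range_succ]

lemma s5_matProd_succ {Ω : Type*} {n : ℕ} (W : ℕ → Ω → Matrix (Fin n) (Fin n) ℝ)
    (s u : ℕ) (hsu : s ≤ u) (ω : Ω) :
    matProd W s (u + 1) ω = matProd W s u ω * W (u + 1) ω := by
  unfold matProd
  have h1 : u + 1 + 1 - s = (u + 1 - s) + 1 := by omega
  rw [h1, List.range_succ, List.map_append, List.prod_append]
  have h2 : s + (u + 1 - s) = u + 1 := by omega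
  simp [h2]

lemma s5_integrable_L2_mul {Ω : Type*} [MeasurableSpace Ω] {μ : Measure Ω}
    {f g : Ω → ℝ} (hf : MemLp f 2 μ) (hg : MemLp g 2 μ) :
    Integrable (fun ω => f ω * g ω) μ := by
  have h : (1 : ENNReal) / 1 = 1 / 2 + 1 / 2 := by
    rw [ENNReal.add_halves]; norm_num
  have := hg.smul hf (r := 1)
  rw [memLp_one_iff_integrable] at this
  exact this

/-- `P·Pᵀ = P` entrywise for `P = 1 - stdA n`. -/
lemma s5_PP {n : ℕ} (hn : 1 ≤ n) (c e : Fin n) :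
    ∑ b, ((1 : Matrix (Fin n) (Fin n) ℝ) - stdA n) c b *
        ((1 : Matrix (Fin n) (Fin n) ℝ) - stdA n) e b =
      ((1 : Matrix (Fin n) (Fin n) ℝ) - stdA n) c e := by
  have hn' : (n : ℝ) ≠ 0 := Nat.cast_ne_zero.mpr (by omega)
  simp only [Matrix.sub_apply, Matrix.one_apply, stdA, Matrix.of_apply]
  have hterm : ∀ b : Fin n,
      ((if c = b then (1:ℝ) else 0) - 1 / n) * ((if e = b then (1:ℝ) else 0) - 1 / n) =
      ((if c = b then (if e = b then (1:ℝ) else 0) else 0) - (if c = b then (1:ℝ)/n else 0))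
        - ((if e = b then (1:ℝ)/n else 0) - 1/n * (1/n)) := by
    intro b; split_ifs <;> ring
  rw [Finset.sum_congr rfl fun b _ => hterm b]
  rw [Finset.sum_sub_distrib, Finset.sum_sub_distrib, Finset.sum_sub_distrib]
  simp only [Finset.sum_ite_eq, Finset.mem_univ, if_true, Finset.sum_const,
    Finset.card_univ, Fintype.card_fin, nsmul_eq_mul]
  have he : (if c = e then (1:ℝ) else 0) = if e = c then (1:ℝ) else 0 := by
    by_cases h : c = e <;> simp [h, eq_comm] <;> tauto
  rw [he]
  field_simp
  ring

end helpers

section singleMatrix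

variable {Ω : Type*} [MeasurableSpace Ω] {μ : Measure Ω} {n : ℕ}

/-- `(M·Q·Mᵀ)_{xy} = ∑_{c,e} Q_{ce} M_{xc} M_{ye}`. -/
lemma s5_quad_entry (M Q : Matrix (Fin n) (Fin n) ℝ) (x y : Fin n) :
    (M * Q * Mᵀ) x y = ∑ c, ∑ e, Q c e * (M x c * M y e) :=
  calc (M * Q * Mᵀ) x y = ∑ e, (∑ c, M x c * Q c e) * M y e := by
        simp [Matrix.mul_apply, Matrix.transpose_apply]
    _ = ∑ e, ∑ c, Q c e * (M x c * M y e) := by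
        refine Finset.sum_congr rfl fun e _ => ?_
        rw [Finset.sum_mul]
        exact Finset.sum_congr rfl fun c _ => by ring
    _ = ∑ c, ∑ e, Q c e * (M x c * M y e) := Finset.sum_comm

lemma s5_quad_integrable {V : Ω → Matrix (Fin n) (Fin n) ℝ}
    (hVL2 : ∀ a b, MemLp (fun ω => V ω a b) 2 μ)
    (Q : Matrix (Fin n) (Fin n) ℝ) (x y : Fin n) :
    Integrable (fun ω => (V ω * Q * (V ω)ᵀ) x y) μ := by
  have h : (fun ω => (V ω * Q * (V ω)ᵀ) x y)
      = fun ω => ∑ c, ∑ e, Q c e * (V ω x c * V ω y e) :=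
    funext fun ω => s5_quad_entry (V ω) Q x y
  rw [h]
  exact integrable_finset_sum _ fun c _ => integrable_finset_sum _ fun e _ =>
    (s5_integrable_L2_mul (hVL2 x c) (hVL2 y e)).const_mul _

lemma s5_quad_int {V : Ω → Matrix (Fin n) (Fin n) ℝ}
    (hVL2 : ∀ a b, MemLp (fun ω => V ω a b) 2 μ)
    (Q : Matrix (Fin n) (Fin n) ℝ) (x y : Fin n) :
    ∫ ω, (V ω * Q * (V ω)ᵀ) x y ∂μ
      = ∑ c, ∑ e, Q c e * ∫ ω, V ω x c * V ω y e ∂μ := by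
  have h : (fun ω => (V ω * Q * (V ω)ᵀ) x y)
      = fun ω => ∑ c, ∑ e, Q c e * (V ω x c * V ω y e) :=
    funext fun ω => s5_quad_entry (V ω) Q x y
  rw [h, integral_finset_sum _ fun c _ => integrable_finset_sum _ fun e _ =>
    (s5_integrable_L2_mul (hVL2 x c) (hVL2 y e)).const_mul (Q c e)]
  refine Finset.sum_congr rfl fun c _ => ?_
  rw [integral_finset_sum _ fun e _ =>
    (s5_integrable_L2_mul (hVL2 x c) (hVL2 y e)).const_mul (Q c e)]
  exact Finset.sum_congr rfl fun e _ => integral_const_mul _ _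

/-- The key one-matrix moment identity in summed form. -/
lemma s5_WPsum {V : Ω → Matrix (Fin n) (Fin n) ℝ}
    (hVL2 : ∀ a b, MemLp (fun ω => V ω a b) 2 μ) {α₁ α₂ : ℝ}
    (hV1 : (Matrix.of fun a b => ∫ ω, (V ω * (V ω)ᵀ) a b ∂μ) =
      α₁ • (1 : Matrix (Fin n) (Fin n) ℝ) + (1 - α₁) • stdA n)
    (hV2 : (Matrix.of fun a b => ∫ ω, (V ω * stdA n * (V ω)ᵀ) a b ∂μ) =
      α₂ • (1 : Matrix (Fin n) (Fin n) ℝ) + (1 - α₂) • stdA n)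
    (x y : Fin n) :
    ∑ c, ∑ e, ((1 : Matrix (Fin n) (Fin n) ℝ) - stdA n) c e *
        ∫ ω, V ω x c * V ω y e ∂μ
      = (α₁ - α₂) * ((1 : Matrix (Fin n) (Fin n) ℝ) - stdA n) x y := by
  have h1 : ∑ c, ∑ e, (1 : Matrix (Fin n) (Fin n) ℝ) c e * ∫ ω, V ω x c * V ω y e ∂μ
      = α₁ * (1 : Matrix (Fin n) (Fin n) ℝ) x y + (1 - α₁) * stdA n x y := by
    rw [← s5_quad_int hVL2 1 x y]
    have := congrFun (congrFun hV1 x) y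
    simp only [Matrix.of_apply, Matrix.add_apply, Matrix.smul_apply, smul_eq_mul] at this
    rw [← this]
    simp [Matrix.mul_one]
  have h2 : ∑ c, ∑ e, stdA n c e * ∫ ω, V ω x c * V ω y e ∂μ
      = α₂ * (1 : Matrix (Fin n) (Fin n) ℝ) x y + (1 - α₂) * stdA n x y := by
    rw [← s5_quad_int hVL2 (stdA n) x y]
    have := congrFun (congrFun hV2 x) y
    simp only [Matrix.of_apply, Matrix.add_apply, Matrix.smul_apply, smul_eq_mul] at this
    rw [← this]
  have hsub : ∀ c e : Fin n, ((1 : Matrix (Fin n) (Fin n) ℝ) - stdA n) c e *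
        ∫ ω, V ω x c * V ω y e ∂μ
      = (1 : Matrix (Fin n) (Fin n) ℝ) c e * (∫ ω, V ω x c * V ω y e ∂μ)
        - stdA n c e * ∫ ω, V ω x c * V ω y e ∂μ := by
    intro c e; rw [Matrix.sub_apply, sub_mul]
  simp only [hsub, Finset.sum_sub_distrib]
  rw [h1, h2, Matrix.sub_apply]
  ring

/-- Entrywise form for the second conjunct. -/
lemma s5_WP {V : Ω → Matrix (Fin n) (Fin n) ℝ}
    (hVL2 : ∀ a b, MemLp (fun ω => V ω a b) 2 μ) {α₁ α₂ : ℝ}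
    (hV1 : (Matrix.of fun a b => ∫ ω, (V ω * (V ω)ᵀ) a b ∂μ) =
      α₁ • (1 : Matrix (Fin n) (Fin n) ℝ) + (1 - α₁) • stdA n)
    (hV2 : (Matrix.of fun a b => ∫ ω, (V ω * stdA n * (V ω)ᵀ) a b ∂μ) =
      α₂ • (1 : Matrix (Fin n) (Fin n) ℝ) + (1 - α₂) • stdA n)
    (x y : Fin n) :
    ∫ ω, (V ω * ((1 : Matrix (Fin n) (Fin n) ℝ) - stdA n) * (V ω)ᵀ) x y ∂μ
      = (α₁ - α₂) * ((1 : Matrix (Fin n) (Fin n) ℝ) - stdA n) x y := by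
  rw [s5_quad_int hVL2 _ x y]
  exact s5_WPsum hVL2 hV1 hV2 x y

end singleMatrix

section indep

variable {Ω : Type*} [MeasurableSpace Ω] {μ : Measure Ω} {n : ℕ}

lemma s5_indep_prod {s t : ℕ} (W : ℕ → Ω → Matrix (Fin n) (Fin n) ℝ)
    (hWmeas : ∀ r, Measurable (W r))
    (hindep : iIndepFun (fun r : Set.Icc s t => W r) μ)
    (k : ℕ) (hk : s + k + 1 ≤ t) :
    IndepFun (matProd W s (s + k)) (W (s + k + 1)) μ := by
  classical
  let S : Finset (Set.Icc s t) := Finset.univ.filter (fun i => (i : ℕ) ≤ s + k)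
  let i0 : Set.Icc s t := ⟨s + k + 1, ⟨by omega, hk⟩⟩
  let T : Finset (Set.Icc s t) := {i0}
  have hST : Disjoint S T := by
    rw [Finset.disjoint_singleton_right]
    simp only [S, Finset.mem_filter, Finset.mem_univ, true_and, i0]
    omega
  have hbase := hindep.indepFun_finset S T hST (fun i => hWmeas i)
  let g : ℕ → (∀ _ : S, Matrix (Fin n) (Fin n) ℝ) → Matrix (Fin n) (Fin n) ℝ :=
    fun j v => if h : j ≤ k then
      v ⟨⟨s + j, ⟨by omega, by omega⟩⟩, by
        simp only [S, Finset.mem_filter, Finset.mem_univ, true_and]; omega⟩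
    else 1
  have hg : ∀ j, Measurable (g j) := by
    intro j
    by_cases h : j ≤ k
    · simp only [g, dif_pos h]; exact measurable_pi_apply _
    · simp only [g, dif_neg h]; exact measurable_const
  have hΦ : Measurable (fun v => ((List.range (k + 1)).map fun j => g j v).prod) :=
    s5_measurable_list_prod _ g hg
  have hΨ : Measurable (fun v : ∀ _ : T, Matrix (Fin n) (Fin n) ℝ =>
      v ⟨i0, Finset.mem_singleton_self i0⟩) := measurable_pi_apply _
  have hcomp := hbase.comp hΦ hΨ
  have h1 : ((fun v => ((List.range (k + 1)).map fun j => g j v).prod) ∘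
      fun ω (i : S) => W i ω) = matProd W s (s + k) := by
    funext ω
    show ((List.range (k + 1)).map fun j => g j (fun i : S => W i ω)).prod = _
    unfold matProd
    have hr : s + k + 1 - s = k + 1 := by omega
    rw [hr]
    congr 1
    apply List.map_congr_left
    intro j hj
    have hj' : j ≤ k := by
      have := List.mem_range.mp hj; omega
    simp only [g, dif_pos hj']
  have h2 : ((fun v : ∀ _ : T, Matrix (Fin n) (Fin n) ℝ =>
      v ⟨i0, Finset.mem_singleton_self i0⟩) ∘ fun ω (i : T) => W i ω) = W (s + k + 1) := rfl
  rwa [h1, h2] at hcomp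

lemma s5_indep_entries {M V : Ω → Matrix (Fin n) (Fin n) ℝ} (h : IndepFun M V μ)
    (a x b y u c v e : Fin n) :
    IndepFun (fun ω => M ω a x * M ω b y) (fun ω => V ω u c * V ω v e) μ := by
  have hφ : Measurable (fun m : Matrix (Fin n) (Fin n) ℝ => m a x * m b y) :=
    Measurable.mul (f := fun m : Matrix (Fin n) (Fin n) ℝ => m a x) (g := fun m => m b y)
      ((measurable_pi_apply x).comp (measurable_pi_apply a))
      ((measurable_pi_apply y).comp (measurable_pi_apply b))
  have hψ : Measurable (fun m : Matrix (Fin n) (Fin n) ℝ => m u c * m v e) :=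
    Measurable.mul (f := fun m : Matrix (Fin n) (Fin n) ℝ => m u c) (g := fun m => m v e)
      ((measurable_pi_apply c).comp (measurable_pi_apply u))
      ((measurable_pi_apply e).comp (measurable_pi_apply v))
  exact h.comp hφ hψ

end indep

section key

variable {Ω : Type*} [MeasurableSpace Ω] {μ : Measure Ω} {n : ℕ}

lemma s5_key {s t : ℕ} (W : ℕ → Ω → Matrix (Fin n) (Fin n) ℝ)
    (hWmeas : ∀ r, Measurable (W r))
    (hWL2 : ∀ r a b, MemLp (fun ω => W r ω a b) 2 μ)
    (hindep : iIndepFun (fun r : Set.Icc s t => W r) μ)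
    (P : Matrix (Fin n) (Fin n) ℝ) (β : ℝ)
    (hsum : ∀ r, s ≤ r → r ≤ t → ∀ x y,
      ∑ c, ∑ e, P c e * ∫ ω, W r ω x c * W r ω y e ∂μ = β * P x y) :
    ∀ k, s + k ≤ t →
      (∀ a b c e : Fin n,
        Integrable (fun ω => matProd W s (s + k) ω a b * matProd W s (s + k) ω c e) μ) ∧
      (∀ x y : Fin n,
        ∑ c, ∑ e, P c e * ∫ ω, matProd W s (s + k) ω x c * matProd W s (s + k) ω y e ∂μ
          = β ^ (k + 1) * P x y) := by
  intro k
  induction k with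
  | zero =>
      intro hk
      have hbase : ∀ ω, matProd W s (s + 0) ω = W s ω := fun ω => s5_matProd_base W s ω
      constructor
      · intro a b c e
        have h : (fun ω => matProd W s (s + 0) ω a b * matProd W s (s + 0) ω c e)
            = fun ω => W s ω a b * W s ω c e := funext fun ω => by rw [hbase]
        rw [h]
        exact s5_integrable_L2_mul (hWL2 s a b) (hWL2 s c e)
      · intro x y
        have h : ∀ c e, (fun ω => matProd W s (s + 0) ω x c * matProd W s (s + 0) ω y e)
            = fun ω => W s ω x c * W s ω y e := fun c e => funext fun ω => by rw [hbase]
        simp only [h]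
        rw [pow_one]
        exact hsum s le_rfl (by omega) x y
  | succ k ih =>
      intro hk1
      have hk : s + k ≤ t := by omega
      obtain ⟨ihInt, ihSum⟩ := ih hk
      set M := matProd W s (s + k) with hM
      set r := s + k + 1 with hr
      have hMW : IndepFun M (W r) μ := s5_indep_prod W hWmeas hindep k (by omega)
      have hMmeas : Measurable M := s5_matProd_measurable W hWmeas s (s + k)
      have hsucc : ∀ ω, matProd W s (s + (k + 1)) ω = M ω * W r ω := by
        intro ω
        have : s + (k + 1) = (s + k) + 1 := by omega
        rw [this]
        exact s5_matProd_succ W s (s + k) (by omega) ω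
      have hexp : ∀ (a b c e : Fin n) ω,
          matProd W s (s + (k + 1)) ω a b * matProd W s (s + (k + 1)) ω c e
            = ∑ u, ∑ v, (M ω a u * M ω c v) * (W r ω u b * W r ω v e) := by
        intro a b c e ω
        rw [hsucc, Matrix.mul_apply, Matrix.mul_apply, Finset.sum_mul_sum]
        exact Finset.sum_congr rfl fun u _ => Finset.sum_congr rfl fun v _ => by ring
      have hIntTerm : ∀ (a b c e u v : Fin n),
          Integrable (fun ω => (M ω a u * M ω c v) * (W r ω u b * W r ω v e)) μ := by
        intro a b c e u v
        exact (s5_indep_entries hMW a u c v u b v e).integrable_mul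
          (ihInt a u c v) (s5_integrable_L2_mul (hWL2 r u b) (hWL2 r v e))
      constructor
      · intro a b c e
        have h : (fun ω => matProd W s (s + (k + 1)) ω a b * matProd W s (s + (k + 1)) ω c e)
            = fun ω => ∑ u, ∑ v, (M ω a u * M ω c v) * (W r ω u b * W r ω v e) :=
          funext fun ω => hexp a b c e ω
        rw [h]
        exact integrable_finset_sum _ fun u _ => integrable_finset_sum _ fun v _ =>
          hIntTerm a b c e u v
      · intro x y
        have hint : ∀ c e : Fin n,
            ∫ ω, matProd W s (s + (k + 1)) ω x c * matProd W s (s + (k + 1)) ω y e ∂μ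
              = ∑ u, ∑ v, (∫ ω, M ω x u * M ω y v ∂μ) * ∫ ω, W r ω u c * W r ω v e ∂μ := by
          intro c e
          have h : (fun ω => matProd W s (s + (k + 1)) ω x c * matProd W s (s + (k + 1)) ω y e)
              = fun ω => ∑ u, ∑ v, (M ω x u * M ω y v) * (W r ω u c * W r ω v e) :=
            funext fun ω => hexp x c y e ω
          rw [h, integral_finset_sum _ fun u _ => integrable_finset_sum _ fun v _ =>
            hIntTerm x c y e u v]
          refine Finset.sum_congr rfl fun u _ => ?_
          rw [integral_finset_sum _ fun v _ => hIntTerm x c y e u v]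
          refine Finset.sum_congr rfl fun v _ => ?_
          exact (s5_indep_entries hMW x u y v u c v e).integral_fun_mul_eq_mul_integral
            (((s5_measurable_entry hMmeas x u).mul
              (s5_measurable_entry hMmeas y v)).aestronglyMeasurable)
            (((s5_measurable_entry (hWmeas r) u c).mul
              (s5_measurable_entry (hWmeas r) v e)).aestronglyMeasurable)
        calc ∑ c, ∑ e, P c e *
              ∫ ω, matProd W s (s + (k + 1)) ω x c * matProd W s (s + (k + 1)) ω y e ∂μ
            = ∑ c, ∑ e, ∑ u, ∑ v, (∫ ω, M ω x u * M ω y v ∂μ) *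
                (P c e * ∫ ω, W r ω u c * W r ω v e ∂μ) := by
              refine Finset.sum_congr rfl fun c _ => Finset.sum_congr rfl fun e _ => ?_
              rw [hint c e, Finset.mul_sum]
              refine Finset.sum_congr rfl fun u _ => ?_
              rw [Finset.mul_sum]
              exact Finset.sum_congr rfl fun v _ => by ring
          _ = ∑ u, ∑ v, ∑ c, ∑ e, (∫ ω, M ω x u * M ω y v ∂μ) *
                (P c e * ∫ ω, W r ω u c * W r ω v e ∂μ) := s5_sum_swap4 _
          _ = ∑ u, ∑ v, (∫ ω, M ω x u * M ω y v ∂μ) * (β * P u v) := by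
              refine Finset.sum_congr rfl fun u _ => Finset.sum_congr rfl fun v _ => ?_
              simp_rw [← Finset.mul_sum]
              rw [hsum r (by omega) (by omega) u v]
          _ = β * ∑ u, ∑ v, P u v * ∫ ω, M ω x u * M ω y v ∂μ := by
              rw [Finset.mul_sum]
              refine Finset.sum_congr rfl fun u _ => ?_
              rw [Finset.mul_sum]
              exact Finset.sum_congr rfl fun v _ => by ring
          _ = β ^ (k + 1 + 1) * P x y := by
              rw [ihSum x y]
              ring

end key

lemma s5_frob_expand {d n : ℕ} (G : Matrix (Fin d) (Fin n) ℝ) (M P : Matrix (Fin n) (Fin n) ℝ)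
    (hPP : ∀ c e, ∑ b, P c b * P e b = P c e) :
    frobSq (G * M * P)
      = ∑ x, ∑ y, (∑ a, G a x * G a y) * (∑ c, ∑ e, P c e * (M x c * M y e)) := by
  unfold frobSq
  have hGMP : ∀ (a : Fin d) (b : Fin n), (G * M * P) a b = ∑ x, G a x * (M * P) x b := by
    intro a b; rw [Matrix.mul_assoc, Matrix.mul_apply]
  calc ∑ a, ∑ b, ((G * M * P) a b) ^ 2
      = ∑ a, ∑ b, ∑ x, ∑ y, (G a x * (M * P) x b) * (G a y * (M * P) y b) := by
        refine Finset.sum_congr rfl fun a _ => Finset.sum_congr rfl fun b _ => ?_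
        rw [pow_two, hGMP, Finset.sum_mul_sum]
    _ = ∑ x, ∑ y, ∑ a, ∑ b, (G a x * (M * P) x b) * (G a y * (M * P) y b) :=
        s5_sum_swap4 _
    _ = ∑ x, ∑ y, (∑ a, G a x * G a y) * (∑ b, (M * P) x b * (M * P) y b) := by
        refine Finset.sum_congr rfl fun x _ => Finset.sum_congr rfl fun y _ => ?_
        rw [Finset.sum_mul_sum]
        exact Finset.sum_congr rfl fun a _ => Finset.sum_congr rfl fun b _ => by ring
    _ = ∑ x, ∑ y, (∑ a, G a x * G a y) * (∑ c, ∑ e, P c e * (M x c * M y e)) := by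
        refine Finset.sum_congr rfl fun x _ => Finset.sum_congr rfl fun y _ => ?_
        congr 1
        calc ∑ b, (M * P) x b * (M * P) y b
            = ∑ b, ∑ c, ∑ e, (M x c * P c b) * (M y e * P e b) := by
              refine Finset.sum_congr rfl fun b _ => ?_
              rw [Matrix.mul_apply, Matrix.mul_apply, Finset.sum_mul_sum]
          _ = ∑ c, ∑ e, ∑ b, (M x c * P c b) * (M y e * P e b) := s5_sum_swap3 _
          _ = ∑ c, ∑ e, P c e * (M x c * M y e) := by
              refine Finset.sum_congr rfl fun c _ => Finset.sum_congr rfl fun e _ => ?_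
              have : ∀ b, (M x c * P c b) * (M y e * P e b)
                  = (M x c * M y e) * (P c b * P e b) := fun b => by ring
              rw [Finset.sum_congr rfl fun b _ => this b, ← Finset.mul_sum, hPP c e]
              ring

/-- Let `W s, …, W t` be independent random `n × n` matrices, each with
`E[W·Wᵀ] = α₁I + (1−α₁)A_n` and `E[W·A_n·Wᵀ] = α₂I + (1−α₂)A_n`, `0 < α₂ < α₁ < 1`.
Then for any fixed `d × n` matrix `G`,
`E‖G·W_s⋯W_t·(I−A_n)‖_F² = (α₁−α₂)^{t−s+1}·‖G·(I−A_n)‖_F²`;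
in particular `E[W·(I−A_n)·Wᵀ] = (α₁−α₂)·(I−A_n)` for each such `W`. -/
theorem statement5 {Ω : Type*} [MeasurableSpace Ω] {μ : Measure Ω} [IsProbabilityMeasure μ]
    {n d : ℕ} (hn : 1 ≤ n) (s t : ℕ) (hst : s ≤ t) (α₁ α₂ : ℝ)
    (hα₂ : 0 < α₂) (hα₁₂ : α₂ < α₁) (hα₁ : α₁ < 1)
    (W : ℕ → Ω → Matrix (Fin n) (Fin n) ℝ)
    (hWmeas : ∀ r, Measurable (W r))
    (hWL2 : ∀ r a b, MemLp (fun ω => W r ω a b) 2 μ)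
    (hindep : iIndepFun (fun r : Set.Icc s t => W r) μ)
    (hW1 : ∀ r ∈ Set.Icc s t,
        (Matrix.of fun a b => ∫ ω, (W r ω * (W r ω)ᵀ) a b ∂μ) =
          α₁ • (1 : Matrix (Fin n) (Fin n) ℝ) + (1 - α₁) • stdA n)
    (hW2 : ∀ r ∈ Set.Icc s t,
        (Matrix.of fun a b => ∫ ω, (W r ω * stdA n * (W r ω)ᵀ) a b ∂μ) =
          α₂ • (1 : Matrix (Fin n) (Fin n) ℝ) + (1 - α₂) • stdA n)
    (G : Matrix (Fin d) (Fin n) ℝ) :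
    (∫ ω, frobSq (G * matProd W s t ω * ((1 : Matrix (Fin n) (Fin n) ℝ) - stdA n)) ∂μ) =
        (α₁ - α₂) ^ (t - s + 1) * frobSq (G * ((1 : Matrix (Fin n) (Fin n) ℝ) - stdA n)) ∧
      ∀ r ∈ Set.Icc s t,
        (Matrix.of fun a b =>
            ∫ ω, (W r ω * ((1 : Matrix (Fin n) (Fin n) ℝ) - stdA n) * (W r ω)ᵀ) a b ∂μ) =
          (α₁ - α₂) • ((1 : Matrix (Fin n) (Fin n) ℝ) - stdA n) := by
  classical
  set P : Matrix (Fin n) (Fin n) ℝ := (1 : Matrix (Fin n) (Fin n) ℝ) - stdA n with hPdef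
  have hPP : ∀ c e, ∑ b, P c b * P e b = P c e := fun c e => s5_PP hn c e
  have hsum : ∀ r, s ≤ r → r ≤ t → ∀ x y,
      ∑ c, ∑ e, P c e * ∫ ω, W r ω x c * W r ω y e ∂μ = (α₁ - α₂) * P x y := by
    intro r h1 h2 x y
    exact s5_WPsum (hWL2 r) (hW1 r (Set.mem_Icc.mpr ⟨h1, h2⟩))
      (hW2 r (Set.mem_Icc.mpr ⟨h1, h2⟩)) x y
  obtain ⟨kInt, kSum⟩ :=
    s5_key W hWmeas hWL2 hindep P (α₁ - α₂) hsum (t - s) (by omega)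
  constructor
  · have hmp : matProd W s (s + (t - s)) = matProd W s t := by
      rw [Nat.add_sub_cancel' hst]
    rw [← hmp]
    have hfe : ∀ ω, frobSq (G * matProd W s (s + (t - s)) ω * P)
        = ∑ x, ∑ y, (∑ a, G a x * G a y) *
            (∑ c, ∑ e, P c e * (matProd W s (s + (t - s)) ω x c *
              matProd W s (s + (t - s)) ω y e)) :=
      fun ω => s5_frob_expand G _ P hPP
    simp only [hfe]
    have hIntInner : ∀ x y : Fin n, Integrable (fun ω =>
        ∑ c, ∑ e, P c e * (matProd W s (s + (t - s)) ω x c *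
          matProd W s (s + (t - s)) ω y e)) μ :=
      fun x y => integrable_finset_sum _ fun c _ => integrable_finset_sum _ fun e _ =>
        (kInt x c y e).const_mul _
    rw [integral_finset_sum _ fun x _ => integrable_finset_sum _ fun y _ =>
      ((hIntInner x y).const_mul _)]
    have hstep : ∀ x : Fin n, ∫ ω, ∑ y, (∑ a, G a x * G a y) *
        (∑ c, ∑ e, P c e * (matProd W s (s + (t - s)) ω x c *
          matProd W s (s + (t - s)) ω y e)) ∂μ
        = ∑ y, (∑ a, G a x * G a y) * ((α₁ - α₂) ^ (t - s + 1) * P x y) := by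
      intro x
      rw [integral_finset_sum _ fun y _ => (hIntInner x y).const_mul _]
      refine Finset.sum_congr rfl fun y _ => ?_
      rw [integral_const_mul]
      congr 1
      rw [integral_finset_sum _ fun c _ => integrable_finset_sum _ fun e _ =>
        (kInt x c y e).const_mul (P c e)]
      rw [← kSum x y]
      refine Finset.sum_congr rfl fun c _ => ?_
      rw [integral_finset_sum _ fun e _ => (kInt x c y e).const_mul (P c e)]
      exact Finset.sum_congr rfl fun e _ => integral_const_mul _ _
    simp only [hstep]
    have hGP : G * P = G * (1 : Matrix (Fin n) (Fin n) ℝ) * P := by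
      rw [Matrix.mul_one]
    rw [hGP, s5_frob_expand G (1 : Matrix (Fin n) (Fin n) ℝ) P hPP]
    have hone : ∀ x y : Fin n,
        ∑ c, ∑ e, P c e * ((1 : Matrix (Fin n) (Fin n) ℝ) x c *
          (1 : Matrix (Fin n) (Fin n) ℝ) y e) = P x y := by
      intro x y
      simp [Matrix.one_apply]
    simp only [hone]
    rw [Finset.mul_sum]
    refine Finset.sum_congr rfl fun x _ => ?_
    rw [Finset.mul_sum]
    exact Finset.sum_congr rfl fun y _ => by ring
  · intro r hr
    ext a b
    simp only [Matrix.of_apply, Matrix.smul_apply, smul_eq_mul]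
    exact s5_WP (hWL2 r) (hW1 r hr) (hW2 r hr) a b
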